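/- Every graph G with mad(G) < 8/3, minimum degree at least 2, no path containing two consecutive internal vertices of degree 2 (i.e., no 2⁺-path), no (1,1,1)-vertex, no 3-vertex having both a 2-neighbor and a (1,1,0)-neighbor, and no 3-vertex having two (1,1,0)-neighbors together with a further 3-neighbor, and with maximum degree at most Δ, satisfies a contradiction: no such nonempty G exists. -/

import Mathlib

open SimpleGraph

/-- Maximum average degree: the supremum over all nonempty subgraphs `H` of `2|E(H)|/|V(H)|`. -/
noncomputable def mad {V : Type} [Fintype V] (G : SimpleGraph V) : ℝ :=
  sSup {x : ℝ | ∃ H : G.Subgraph, H.verts.Nonempty ∧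
    x = 2 * H.edgeSet.ncard / H.verts.ncard}

/-- Two distinct vertices are at distance at most 2. -/
def TwoDistAdj {V : Type} (G : SimpleGraph V) (u v : V) : Prop :=
  u ≠ v ∧ (G.Adj u v ∨ ∃ w, G.Adj u w ∧ G.Adj w v)

/-- `φ` is a 2-distance coloring of `G` from the lists `L`: each vertex gets a color from
its list and vertices at distance at most 2 get distinct colors. -/
def IsTwoDistListColoring {V : Type} (G : SimpleGraph V) (L : V → Finset ℕ) (φ : V → ℕ) :
    Prop :=
  (∀ v, φ v ∈ L v) ∧ ∀ u v, TwoDistAdj G u v → φ u ≠ φ v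

/-- A `(1,1,0)`-vertex: a 3-vertex with exactly two neighbors of degree 2. -/
def IsOneOneZeroVertex {V : Type} [Fintype V] [DecidableEq V] (G : SimpleGraph V)
    [DecidableRel G.Adj] (v : V) : Prop :=
  G.degree v = 3 ∧ ((G.neighborFinset v).filter fun u => G.degree u = 2).card = 2

open Classical in
/-- Discharging transfer function: `u` sends one unit of charge to `v` when `v` is a
2-neighbor of `u`, or `u` has degree at least 4, or `u` is a non-`(1,1,0)` 3-vertex and
`v` a `(1,1,0)`-neighbor. -/
private noncomputable def dsend {V : Type} [Fintype V] [DecidableEq V] (G : SimpleGraph V)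
    [DecidableRel G.Adj] (u v : V) : ℤ :=
  if G.Adj u v ∧ (G.degree v = 2 ∨ 4 ≤ G.degree u ∨
      (G.degree u = 3 ∧ ¬ IsOneOneZeroVertex G u ∧ IsOneOneZeroVertex G v)) then 1 else 0

private lemma dsend_nonneg {V : Type} [Fintype V] [DecidableEq V] (G : SimpleGraph V)
    [DecidableRel G.Adj] (u v : V) : 0 ≤ dsend G u v := by
  unfold dsend; split_ifs <;> norm_num

private lemma dsend_le_one {V : Type} [Fintype V] [DecidableEq V] (G : SimpleGraph V)
    [DecidableRel G.Adj] (u v : V) : dsend G u v ≤ 1 := by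
  unfold dsend; split_ifs <;> norm_num

private lemma dsend_eq_zero {V : Type} [Fintype V] [DecidableEq V] (G : SimpleGraph V)
    [DecidableRel G.Adj] {u v : V} (h : ¬ G.Adj u v) : dsend G u v = 0 := by
  unfold dsend; rw [if_neg]; tauto

private lemma dsend_eq_one {V : Type} [Fintype V] [DecidableEq V] (G : SimpleGraph V)
    [DecidableRel G.Adj] {u v : V} (h : G.Adj u v)
    (h' : G.degree v = 2 ∨ 4 ≤ G.degree u ∨
      (G.degree u = 3 ∧ ¬ IsOneOneZeroVertex G u ∧ IsOneOneZeroVertex G v)) :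
    dsend G u v = 1 := by
  unfold dsend; rw [if_pos ⟨h, h'⟩]

/-- Discharging conclusion of Section 2: there is no nonempty graph with
`mad < 8/3`, minimum degree at least 2, no `2⁺`-path, no `(1,1,1)`-vertex,
no 3-vertex with both a 2-neighbor and a `(1,1,0)`-neighbor, no 3-vertex with two
`(1,1,0)`-neighbors and a further 3-neighbor, and maximum degree at most `Δ`. -/
theorem no_reduced_graph
    {V : Type} [Fintype V] [Nonempty V] [DecidableEq V] (G : SimpleGraph V)
    [DecidableRel G.Adj] (Δ : ℕ)
    (hmad : mad G < 8 / 3)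
    (hmin : ∀ v : V, 2 ≤ G.degree v)
    (hΔ : G.maxDegree ≤ Δ)
    (hno2path : ¬ ∃ v w, G.Adj v w ∧ G.degree v = 2 ∧ G.degree w = 2)
    (hno111 : ¬ ∃ v, G.degree v = 3 ∧ ∀ u ∈ G.neighborFinset v, G.degree u = 2)
    (hnoA : ¬ ∃ v w t, G.degree v = 3 ∧ G.Adj v w ∧ G.degree w = 2 ∧
      G.Adj v t ∧ IsOneOneZeroVertex G t)
    (hnoB : ¬ ∃ u v w t, G.degree u = 3 ∧ G.Adj u v ∧ G.Adj u w ∧ G.Adj u t ∧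
      v ≠ w ∧ v ≠ t ∧ w ≠ t ∧ IsOneOneZeroVertex G v ∧ IsOneOneZeroVertex G w ∧
      G.degree t = 3) :
    False := by
  classical
  -- Per-vertex discharging inequality.
  have hkey : ∀ u : V, ∑ v ∈ G.neighborFinset u, dsend G u v ≤
      3 * (G.degree u : ℤ) - 8 + ∑ v ∈ G.neighborFinset u, dsend G v u := by
    intro u
    have hin0 : 0 ≤ ∑ v ∈ G.neighborFinset u, dsend G v u :=
      Finset.sum_nonneg fun v _ => dsend_nonneg G v u
    have hcard : (G.neighborFinset u).card = G.degree u := G.card_neighborFinset_eq_degree u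
    have hge := hmin u
    rcases lt_or_ge (G.degree u) 4 with h4 | h4
    · -- degree 2 or 3
      interval_cases hdu : G.degree u
      · -- degree 2
        have hout : ∑ v ∈ G.neighborFinset u, dsend G u v = 0 := by
          refine Finset.sum_eq_zero fun v hv => ?_
          have hadj : G.Adj u v := (mem_neighborFinset G u v).mp hv
          have hv2 : G.degree v ≠ 2 := fun h => hno2path ⟨u, v, hadj, hdu, h⟩
          unfold dsend; rw [if_neg]
          rintro ⟨-, h2 | h4' | ⟨h3, -⟩⟩ <;> omega
        have hin : ∑ v ∈ G.neighborFinset u, dsend G v u =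
            (G.neighborFinset u).card := by
          rw [Finset.sum_congr rfl fun v hv => dsend_eq_one G
            (G.adj_symm ((mem_neighborFinset G u v).mp hv)) (Or.inl hdu)]
          simp
        rw [hout, hin, hcard]; norm_num
      · -- degree 3
        have hST : ∑ v ∈ G.neighborFinset u, dsend G u v =
            ∑ v ∈ (G.neighborFinset u).filter (fun v => G.degree v = 2), dsend G u v +
            ∑ v ∈ (G.neighborFinset u).filter (fun v => ¬ G.degree v = 2), dsend G u v :=
          (Finset.sum_filter_add_sum_filter_not _ _ _).symm
        have hSsub : (G.neighborFinset u).filter (fun v => G.degree v = 2) ⊆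
            G.neighborFinset u := Finset.filter_subset _ _
        have hSplit : ((G.neighborFinset u).filter (fun v => G.degree v = 2)).card +
            ((G.neighborFinset u).filter (fun v => ¬ G.degree v = 2)).card = 3 := by
          rw [Finset.card_filter_add_card_filter_not, hcard]
        have hScard : ((G.neighborFinset u).filter (fun v => G.degree v = 2)).card ≤ 2 := by
          by_contra hc
          push_neg at hc
          have h3 : ((G.neighborFinset u).filter (fun v => G.degree v = 2)).card = 3 := by
            omega
          have hSN : (G.neighborFinset u).filter (fun v => G.degree v = 2) =
              G.neighborFinset u := Finset.eq_of_subset_of_card_le hSsub (by omega)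
          refine hno111 ⟨u, hdu, fun v hv => ?_⟩
          rw [← hSN] at hv
          exact (Finset.mem_filter.mp hv).2
        have hSsum : ∑ v ∈ (G.neighborFinset u).filter (fun v => G.degree v = 2),
            dsend G u v =
            ((G.neighborFinset u).filter (fun v => G.degree v = 2)).card := by
          rw [Finset.sum_congr rfl fun v hv => dsend_eq_one G
            ((mem_neighborFinset G u v).mp (hSsub hv))
            (Or.inl (Finset.mem_filter.mp hv).2)]
          simp
        have hTval : ∀ v ∈ (G.neighborFinset u).filter (fun v => ¬ G.degree v = 2),
            dsend G u v = if (¬ IsOneOneZeroVertex G u ∧ IsOneOneZeroVertex G v) then 1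
              else 0 := by
          intro v hv
          obtain ⟨hvN, hv2⟩ := Finset.mem_filter.mp hv
          have hadj : G.Adj u v := (mem_neighborFinset G u v).mp hvN
          by_cases hO : ¬ IsOneOneZeroVertex G u ∧ IsOneOneZeroVertex G v
          · rw [if_pos hO]; exact dsend_eq_one G hadj (Or.inr (Or.inr ⟨hdu, hO⟩))
          · rw [if_neg hO]; unfold dsend; rw [if_neg]
            rintro ⟨-, h2 | h4' | ⟨-, h⟩⟩
            · exact hv2 h2
            · omega
            · exact hO h
        interval_cases hSc : ((G.neighborFinset u).filter (fun v => G.degree v = 2)).card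
        · -- no 2-neighbors
          have hnotO : ¬ IsOneOneZeroVertex G u := by
            intro h
            have h2 := h.2
            rw [hSc] at h2
            omega
          have hSempty : (G.neighborFinset u).filter (fun v => G.degree v = 2) = ∅ :=
            Finset.card_eq_zero.mp hSc
          have hTval' : ∀ v ∈ (G.neighborFinset u).filter (fun v => ¬ G.degree v = 2),
              dsend G u v = if IsOneOneZeroVertex G v then 1 else 0 := by
            intro v hv
            rw [hTval v hv]
            by_cases h : IsOneOneZeroVertex G v
            · rw [if_pos h, if_pos ⟨hnotO, h⟩]
            · rw [if_neg h, if_neg (fun hc => h hc.2)]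
          have hTsum : ∑ v ∈ (G.neighborFinset u).filter (fun v => ¬ G.degree v = 2),
              dsend G u v =
              (((G.neighborFinset u).filter (fun v => ¬ G.degree v = 2)).filter
                (fun v => IsOneOneZeroVertex G v)).card := by
            rw [Finset.sum_congr rfl hTval', Finset.sum_boole]
          rcases le_or_gt (((G.neighborFinset u).filter (fun v => ¬ G.degree v = 2)).filter
                (fun v => IsOneOneZeroVertex G v)).card 1 with hm | hm
          · rw [hST, hSsum, hTsum]
            push_cast
            have : ((((G.neighborFinset u).filter (fun v => ¬ G.degree v = 2)).filter
                (fun v => IsOneOneZeroVertex G v)).card : ℤ) ≤ 1 := by exact_mod_cast hm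
            linarith
          · -- two (1,1,0)-neighbors and a third neighbor of degree ≥ 4
            obtain ⟨v, hv, w, hw, hvw⟩ := Finset.one_lt_card.mp hm
            obtain ⟨hvT, hvO⟩ := Finset.mem_filter.mp hv
            obtain ⟨hwT, hwO⟩ := Finset.mem_filter.mp hw
            have hvN : v ∈ G.neighborFinset u := (Finset.mem_filter.mp hvT).1
            have hwN : w ∈ G.neighborFinset u := (Finset.mem_filter.mp hwT).1
            have hvadj : G.Adj u v := (mem_neighborFinset G u v).mp hvN
            have hwadj : G.Adj u w := (mem_neighborFinset G u w).mp hwN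
            have hpair : ({v, w} : Finset V) ⊆ G.neighborFinset u := by
              intro x hx
              rcases Finset.mem_insert.mp hx with h | h
              · exact h ▸ hvN
              · exact (Finset.mem_singleton.mp h) ▸ hwN
            have hpc : ({v, w} : Finset V).card = 2 := Finset.card_pair hvw
            have htcard : ((G.neighborFinset u) \ ({v, w} : Finset V)).card = 1 := by
              rw [Finset.card_sdiff_of_subset hpair, hpc, hcard]
            obtain ⟨t, ht⟩ := Finset.card_eq_one.mp htcard
            have htmem : t ∈ (G.neighborFinset u) \ ({v, w} : Finset V) :=
              ht ▸ Finset.mem_singleton_self t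
            have htN : t ∈ G.neighborFinset u := (Finset.mem_sdiff.mp htmem).1
            have htvw : t ∉ ({v, w} : Finset V) := (Finset.mem_sdiff.mp htmem).2
            have htv : v ≠ t := fun h => htvw (h ▸ Finset.mem_insert_self v {w})
            have htw : w ≠ t := fun h => htvw (h ▸ Finset.mem_insert_of_mem
              (Finset.mem_singleton_self w))
            have htadj : G.Adj u t := (mem_neighborFinset G u t).mp htN
            have ht2 : G.degree t ≠ 2 := by
              intro h
              have : t ∈ (G.neighborFinset u).filter (fun v => G.degree v = 2) :=
                Finset.mem_filter.mpr ⟨htN, h⟩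
              rw [hSempty] at this
              exact absurd this (Finset.notMem_empty t)
            have ht3 : G.degree t ≠ 3 := fun h =>
              hnoB ⟨u, v, w, t, hdu, hvadj, hwadj, htadj, hvw, htv, htw, hvO, hwO, h⟩
            have ht4 : 4 ≤ G.degree t := by have := hmin t; omega
            -- m ≤ 2
            have htT : t ∈ (G.neighborFinset u).filter (fun v => ¬ G.degree v = 2) :=
              Finset.mem_filter.mpr ⟨htN, ht2⟩
            have htnotO : t ∉ ((G.neighborFinset u).filter (fun v => ¬ G.degree v = 2)).filter
                (fun v => IsOneOneZeroVertex G v) := fun h =>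
              ht3 (Finset.mem_filter.mp h).2.1
            have hmle : (((G.neighborFinset u).filter (fun v => ¬ G.degree v = 2)).filter
                (fun v => IsOneOneZeroVertex G v)).card ≤ 2 := by
              have hsub : ((G.neighborFinset u).filter (fun v => ¬ G.degree v = 2)).filter
                  (fun v => IsOneOneZeroVertex G v) ⊆
                  ((G.neighborFinset u).filter (fun v => ¬ G.degree v = 2)).erase t := by
                intro x hx
                exact Finset.mem_erase.mpr ⟨fun h => htnotO (h ▸ hx),
                  (Finset.mem_filter.mp hx).1⟩
              have h1 := Finset.card_le_card hsub
              have h2 := Finset.card_erase_of_mem htT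
              omega
            have htu : dsend G t u = 1 :=
              dsend_eq_one G (G.adj_symm htadj) (Or.inr (Or.inl ht4))
            have hin1 : 1 ≤ ∑ x ∈ G.neighborFinset u, dsend G x u := by
              calc (1:ℤ) = dsend G t u := htu.symm
                _ ≤ ∑ x ∈ G.neighborFinset u, dsend G x u :=
                  Finset.single_le_sum (fun x _ => dsend_nonneg G x u) htN
            rw [hST, hSsum, hTsum]
            push_cast
            have : ((((G.neighborFinset u).filter (fun v => ¬ G.degree v = 2)).filter
                (fun v => IsOneOneZeroVertex G v)).card : ℤ) ≤ 2 := by exact_mod_cast hmle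
            linarith
        · -- one 2-neighbor
          obtain ⟨s, hs⟩ := Finset.card_eq_one.mp hSc
          have hsS : s ∈ (G.neighborFinset u).filter (fun v => G.degree v = 2) :=
            hs ▸ Finset.mem_singleton_self s
          have hs2 : G.degree s = 2 := (Finset.mem_filter.mp hsS).2
          have hsadj : G.Adj u s := (mem_neighborFinset G u s).mp (hSsub hsS)
          have hTzero : ∀ v ∈ (G.neighborFinset u).filter (fun v => ¬ G.degree v = 2),
              dsend G u v = 0 := by
            intro v hv
            rw [hTval v hv, if_neg]
            rintro ⟨-, hOv⟩
            exact hnoA ⟨u, s, v, hdu, hsadj, hs2, (mem_neighborFinset G u v).mp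
              (Finset.mem_filter.mp hv).1, hOv⟩
          rw [hST, hSsum, Finset.sum_eq_zero hTzero]
          push_cast; linarith
        · -- two 2-neighbors: u is a (1,1,0)-vertex
          have hO : IsOneOneZeroVertex G u := ⟨hdu, hSc⟩
          have hTcard : ((G.neighborFinset u).filter (fun v => ¬ G.degree v = 2)).card = 1 := by
            omega
          obtain ⟨w, hw⟩ := Finset.card_eq_one.mp hTcard
          have hwT : w ∈ (G.neighborFinset u).filter (fun v => ¬ G.degree v = 2) :=
            hw ▸ Finset.mem_singleton_self w
          obtain ⟨hwN, hw2⟩ := Finset.mem_filter.mp hwT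
          have hwadj : G.Adj u w := (mem_neighborFinset G u w).mp hwN
          have hTzero : ∀ v ∈ (G.neighborFinset u).filter (fun v => ¬ G.degree v = 2),
              dsend G u v = 0 := by
            intro v hv
            rw [hTval v hv, if_neg]
            rintro ⟨hnO, -⟩; exact hnO hO
          have hwu : dsend G w u = 1 := by
            refine dsend_eq_one G (G.adj_symm hwadj) ?_
            rcases lt_or_ge (G.degree w) 4 with h4w | h4w
            · have hw3 : G.degree w = 3 := by have := hmin w; omega
              refine Or.inr (Or.inr ⟨hw3, fun hOw => ?_, hO⟩)
              have hne : ((G.neighborFinset w).filter fun x => G.degree x = 2).Nonempty := by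
                rw [← Finset.card_pos, hOw.2]; norm_num
              obtain ⟨s', hs'⟩ := hne
              exact hnoA ⟨w, s', u, hw3, (mem_neighborFinset G w s').mp
                (Finset.mem_filter.mp hs').1, (Finset.mem_filter.mp hs').2,
                G.adj_symm hwadj, hO⟩
            · exact Or.inr (Or.inl h4w)
          have hin1 : 1 ≤ ∑ v ∈ G.neighborFinset u, dsend G v u := by
            calc (1:ℤ) = dsend G w u := hwu.symm
              _ ≤ ∑ v ∈ G.neighborFinset u, dsend G v u :=
                Finset.single_le_sum (fun v _ => dsend_nonneg G v u) hwN
          rw [hST, hSsum, Finset.sum_eq_zero hTzero]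
          push_cast; linarith
    · -- degree ≥ 4
      have hout : ∑ v ∈ G.neighborFinset u, dsend G u v ≤ (G.degree u : ℤ) := by
        calc ∑ v ∈ G.neighborFinset u, dsend G u v ≤ ∑ _v ∈ G.neighborFinset u, (1:ℤ) :=
              Finset.sum_le_sum fun v _ => dsend_le_one G u v
          _ = (G.neighborFinset u).card := by simp
          _ = (G.degree u : ℤ) := by rw [hcard]
      have h4' : (4:ℤ) ≤ (G.degree u : ℤ) := by exact_mod_cast h4
      linarith
  -- Sum over all vertices: sent = received, so the total charge is nonnegative.
  have hswap : ∑ u : V, ∑ v ∈ G.neighborFinset u, dsend G u v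
      = ∑ u : V, ∑ v ∈ G.neighborFinset u, dsend G v u := by
    have ext : ∀ f : V → V → ℤ, (∀ u v, ¬ G.Adj u v → f u v = 0) →
        ∀ u : V, ∑ v ∈ G.neighborFinset u, f u v = ∑ v : V, f u v := by
      intro f hf u
      refine Finset.sum_subset (Finset.subset_univ _) fun v _ hv => ?_
      exact hf u v (fun h => hv ((mem_neighborFinset G u v).mpr h))
    rw [Finset.sum_congr rfl fun u _ => ext _ (fun a b h => dsend_eq_zero G h) u,
        Finset.sum_congr rfl fun u _ => ext (fun a b => dsend G b a)
          (fun a b h => dsend_eq_zero G (fun h' => h (G.adj_symm h'))) u]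
    exact Finset.sum_comm
  have htotal : (0:ℤ) ≤ ∑ u : V, (3 * (G.degree u : ℤ) - 8) := by
    have h1 := Finset.sum_le_sum (s := Finset.univ) fun u (_ : u ∈ Finset.univ) => hkey u
    rw [Finset.sum_add_distrib, ← hswap] at h1
    linarith
  -- But mad < 8/3 forces the total charge to be negative.
  have hn : 0 < Fintype.card V := Fintype.card_pos
  have hedge : (G.edgeSet.ncard : ℝ) = (G.edgeFinset.card : ℝ) := by
    rw [Set.ncard_eq_toFinset_card' G.edgeSet]
    simp only [SimpleGraph.edgeFinset]
  have hmem : (2 * (G.edgeSet.ncard : ℝ) / (Fintype.card V : ℝ)) ∈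
      {x : ℝ | ∃ H : G.Subgraph, H.verts.Nonempty ∧
        x = 2 * H.edgeSet.ncard / H.verts.ncard} := by
    refine ⟨⊤, by simp [Set.univ_nonempty], ?_⟩
    rw [Subgraph.edgeSet_top, Subgraph.verts_top, Set.ncard_univ, Nat.card_eq_fintype_card]
  have hbdd : BddAbove {x : ℝ | ∃ H : G.Subgraph, H.verts.Nonempty ∧
      x = 2 * H.edgeSet.ncard / H.verts.ncard} := by
    refine ⟨2 * G.edgeSet.ncard, ?_⟩
    rintro x ⟨H, hne, rfl⟩
    have h1 : (1:ℝ) ≤ H.verts.ncard := by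
      have : 0 < H.verts.ncard := (Set.ncard_pos (Set.toFinite _)).mpr hne
      exact_mod_cast this
    have h2 : (H.edgeSet.ncard : ℝ) ≤ G.edgeSet.ncard := by
      exact_mod_cast Set.ncard_le_ncard H.edgeSet_subset (Set.toFinite _)
    have h3 : (0:ℝ) ≤ (H.edgeSet.ncard : ℝ) := by positivity
    rw [div_le_iff₀ (by linarith)]
    nlinarith
  have hle : 2 * (G.edgeSet.ncard : ℝ) / (Fintype.card V : ℝ) < 8 / 3 :=
    lt_of_le_of_lt (le_csSup hbdd hmem) hmad
  have hE : 6 * G.edgeFinset.card < 8 * Fintype.card V := by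
    rw [div_lt_iff₀ (by exact_mod_cast hn)] at hle
    rw [hedge] at hle
    have : (6 * G.edgeFinset.card : ℝ) < (8 * Fintype.card V : ℝ) := by push_cast; linarith
    exact_mod_cast this
  have hdegsum : ∑ u : V, G.degree u = 2 * G.edgeFinset.card :=
    G.sum_degrees_eq_twice_card_edges
  have : ∑ u : V, (3 * (G.degree u : ℤ) - 8) =
      6 * (G.edgeFinset.card : ℤ) - 8 * Fintype.card V := by
    rw [Finset.sum_sub_distrib, ← Finset.mul_sum]
    have : ∑ u : V, (G.degree u : ℤ) = 2 * (G.edgeFinset.card : ℤ) := by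
      exact_mod_cast congrArg (Nat.cast : ℕ → ℤ) hdegsum
    rw [this]
    simp [Finset.card_univ]
    ring
  rw [this] at htotal
  omega
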